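/- Let C ⊆ ℝⁿ be a nonempty closed convex set whose recession cone rec C is polyhedral. Then C is approximately M-decomposable if and only if C is hyperbolic. -/

import Mathlib

open scoped InnerProductSpace Pointwise ENNReal
open Metric Filter

/-- The support function `σ_C(d) = sup_{x ∈ C} ⟪d, x⟫` of a set `C ⊆ ℝⁿ`,
with values in the extended reals. -/
noncomputable def suppFun {n : ℕ} (C : Set (EuclideanSpace ℝ (Fin n)))
    (d : EuclideanSpace ℝ (Fin n)) : EReal :=
  ⨆ x ∈ C, ((⟪d, x⟫_ℝ : ℝ) : EReal)

/-- The effective domain `dom σ_C = {d : σ_C(d) < +∞}` of the support function. -/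
def suppDom {n : ℕ} (C : Set (EuclideanSpace ℝ (Fin n))) :
    Set (EuclideanSpace ℝ (Fin n)) :=
  {d | suppFun C d < ⊤}

/-- The recession cone `rec C` of a set `C`. -/
def recCone {n : ℕ} (C : Set (EuclideanSpace ℝ (Fin n))) :
    Set (EuclideanSpace ℝ (Fin n)) :=
  {y | ∀ x ∈ C, ∀ t : ℝ, 0 ≤ t → x + t • y ∈ C}

/-- The truncation `C_r = (C ∩ rB) + rec C` of `C` of radius `r`. -/
def trunc {n : ℕ} (C : Set (EuclideanSpace ℝ (Fin n))) (r : ℝ) :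
    Set (EuclideanSpace ℝ (Fin n)) :=
  (C ∩ closedBall 0 r) + recCone C

/-- `C` is approximately M-decomposable: for every `ε > 0` there is `r > 0`
with `C ⊆ C_r + εB`. -/
def ApproxMDecomposable {n : ℕ} (C : Set (EuclideanSpace ℝ (Fin n))) : Prop :=
  ∀ ε > (0 : ℝ), ∃ r > (0 : ℝ), C ⊆ trunc C r + closedBall 0 ε

/-- `C` is M-decomposable: `C = M + rec C` for some compact convex `M`. -/
def MDecomposable {n : ℕ} (C : Set (EuclideanSpace ℝ (Fin n))) : Prop :=
  ∃ M : Set (EuclideanSpace ℝ (Fin n)), IsCompact M ∧ Convex ℝ M ∧ C = M + recCone C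

/-- `C` is hyperbolic: `C ⊆ M + rec C` for some compact convex `M`. -/
def Hyperbolic {n : ℕ} (C : Set (EuclideanSpace ℝ (Fin n))) : Prop :=
  ∃ M : Set (EuclideanSpace ℝ (Fin n)), IsCompact M ∧ Convex ℝ M ∧ C ⊆ M + recCone C

/-- The polar cone `K° = {d : ⟪d, x⟫ ≤ 0 for all x ∈ K}` of a cone `K`. -/
def polarCone {n : ℕ} (K : Set (EuclideanSpace ℝ (Fin n))) :
    Set (EuclideanSpace ℝ (Fin n)) :=
  {d | ∀ x ∈ K, ⟪d, x⟫_ℝ ≤ 0}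

/-- A cone is polyhedral if it is the intersection of finitely many closed
half-spaces whose boundary hyperplanes pass through the origin. -/
def IsPolyhedralCone {n : ℕ} (K : Set (EuclideanSpace ℝ (Fin n))) : Prop :=
  ∃ (m : ℕ) (a : Fin m → EuclideanSpace ℝ (Fin n)),
    K = {x | ∀ i, ⟪a i, x⟫_ℝ ≤ 0}

section ConeAux

variable {E : Type*} [NormedAddCommGroup E] [InnerProductSpace ℝ E]

private lemma sum_finset_subtype' {ι M : Type*} [Fintype ι] [AddCommMonoid M] (s : Finset ι)
    (f : ι → M) (hf : ∀ i ∉ s, f i = 0) : ∑ i : s, f ↑i = ∑ i, f i := by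
  rw [Finset.sum_coe_sort s f]
  exact Finset.sum_subset s.subset_univ fun i _ hi => hf i hi

private lemma sum_subtype_pred' {ι M : Type*} [Fintype ι] [AddCommMonoid M] (p : ι → Prop)
    [DecidablePred p] (f : ι → M) (hf : ∀ i, ¬ p i → f i = 0) :
    ∑ i : {i // p i}, f ↑i = ∑ i, f i := by
  classical
  rw [← Finset.sum_subtype (s := Finset.univ.filter p) (fun i => by simp) f]
  exact Finset.sum_subset (Finset.filter_subset _ _) fun i _ hi => hf i (by simpa using hi)

/-- The finitely generated cone with generators `a i`. -/
def coneOf {ι : Type*} [Fintype ι] (a : ι → E) : Set E :=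
  {x | ∃ μ : ι → ℝ, (∀ i, 0 ≤ μ i) ∧ ∑ i, μ i • a i = x}

lemma zero_mem_coneOf {ι : Type*} [Fintype ι] (a : ι → E) : (0 : E) ∈ coneOf a :=
  ⟨fun _ => 0, fun _ => le_rfl, by simp⟩

lemma generator_mem_coneOf {ι : Type*} [Fintype ι] (a : ι → E) (i : ι) :
    a i ∈ coneOf a := by
  classical
  refine ⟨fun j => if j = i then 1 else 0, fun j => ?_, ?_⟩
  · show (0:ℝ) ≤ if j = i then 1 else 0
    split <;> norm_num
  · show ∑ j, (if j = i then (1:ℝ) else 0) • a j = a i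
    simp [ite_smul]

lemma coneOf_add_mem {ι : Type*} [Fintype ι] (a : ι → E) {x y : E}
    (hx : x ∈ coneOf a) (hy : y ∈ coneOf a) : x + y ∈ coneOf a := by
  obtain ⟨μ, hμ, hμs⟩ := hx
  obtain ⟨ν, hν, hνs⟩ := hy
  exact ⟨fun i => μ i + ν i, fun i => add_nonneg (hμ i) (hν i), by
    simp only [add_smul, Finset.sum_add_distrib, hμs, hνs]⟩

lemma coneOf_smul_mem {ι : Type*} [Fintype ι] (a : ι → E) {c : ℝ} {x : E}
    (hc : 0 ≤ c) (hx : x ∈ coneOf a) : c • x ∈ coneOf a := by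
  obtain ⟨μ, hμ, hμs⟩ := hx
  exact ⟨fun i => c * μ i, fun i => mul_nonneg hc (hμ i), by
    simp only [mul_smul, ← Finset.smul_sum, hμs]⟩

lemma inner_le_zero_of_mem_coneOf {ι : Type*} [Fintype ι] {a : ι → E} {d w : E}
    (hd : d ∈ coneOf a) (hw : ∀ i, ⟪a i, w⟫_ℝ ≤ 0) : ⟪d, w⟫_ℝ ≤ 0 := by
  obtain ⟨μ, hμ, rfl⟩ := hd
  rw [sum_inner]
  refine Finset.sum_nonpos fun i _ => ?_
  rw [real_inner_smul_left]
  exact mul_nonpos_of_nonneg_of_nonpos (hμ i) (hw i)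

/-- Carathéodory's theorem for finitely generated cones. -/
lemma caratheodory_cone {ι : Type*} [Fintype ι] (a : ι → E) (μ : ι → ℝ) (hμ : ∀ i, 0 ≤ μ i) :
    ∃ ν : ι → ℝ, (∀ i, 0 ≤ ν i) ∧ (∀ i, μ i = 0 → ν i = 0) ∧
      ∑ i, ν i • a i = ∑ i, μ i • a i ∧
      LinearIndependent ℝ (fun i : {i // ν i ≠ 0} => a i) := by
  classical
  suffices H : ∀ (N : ℕ) (μ : ι → ℝ), (Finset.univ.filter fun i => μ i ≠ 0).card ≤ N →
      (∀ i, 0 ≤ μ i) →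
      ∃ ν : ι → ℝ, (∀ i, 0 ≤ ν i) ∧ (∀ i, μ i = 0 → ν i = 0) ∧
        ∑ i, ν i • a i = ∑ i, μ i • a i ∧
        LinearIndependent ℝ (fun i : {i // ν i ≠ 0} => a i) by
    exact H _ μ le_rfl hμ
  intro N
  induction N with
  | zero =>
    intro μ hcard hμ0
    have hall : ∀ i, μ i = 0 := by
      intro i
      by_contra hi
      have hmem : i ∈ Finset.univ.filter fun i => μ i ≠ 0 := by simp [hi]
      have := Finset.card_pos.mpr ⟨i, hmem⟩
      omega
    refine ⟨μ, hμ0, fun i _ => hall i, rfl, ?_⟩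
    have : IsEmpty {i // μ i ≠ 0} := ⟨fun i => i.2 (hall i)⟩
    exact linearIndependent_empty_type
  | succ N ih =>
    intro μ hcard hμ0
    by_cases hLI : LinearIndependent ℝ (fun i : {i // μ i ≠ 0} => a i)
    · exact ⟨μ, hμ0, fun i h => h, rfl, hLI⟩
    obtain ⟨g, hgsum, j, hgj⟩ := Fintype.not_linearIndependent_iff.mp hLI
    set c0 : ι → ℝ := fun i => if h : μ i ≠ 0 then g ⟨i, h⟩ else 0 with hc0
    have hc0supp : ∀ i, c0 i ≠ 0 → μ i ≠ 0 := by
      intro i hi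
      by_contra h
      apply hi
      simp only [hc0]
      rw [dif_neg (not_not_intro h)]
    have hc0sum : ∑ i, c0 i • a i = 0 := by
      rw [← sum_subtype_pred' (fun i => μ i ≠ 0) (fun i => c0 i • a i)
        (fun i hi => by
          show c0 i • a i = 0
          have : c0 i = 0 := by simp only [hc0]; rw [dif_neg hi]
          rw [this, zero_smul])]
      rw [← hgsum]
      apply Fintype.sum_congr
      intro i
      show c0 ↑i • a ↑i = g i • a ↑i
      have : c0 ↑i = g i := by simp only [hc0]; rw [dif_pos i.2, Subtype.coe_eta]
      rw [this]
    have hc0j : c0 j.1 ≠ 0 := by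
      have : c0 j.1 = g j := by simp only [hc0]; rw [dif_pos j.2, Subtype.coe_eta]
      rw [this]
      exact hgj
    obtain ⟨c, hcsum, hcsupp, j0, hj0⟩ :
        ∃ c : ι → ℝ, ∑ i, c i • a i = 0 ∧ (∀ i, c i ≠ 0 → μ i ≠ 0) ∧ ∃ i, 0 < c i := by
      rcases lt_or_gt_of_ne hc0j with h | h
      · refine ⟨-c0, ?_, fun i hi => hc0supp i (by simpa using hi), j.1, by simpa using h⟩
        simp only [Pi.neg_apply, neg_smul, Finset.sum_neg_distrib, hc0sum, neg_zero]
      · exact ⟨c0, hc0sum, hc0supp, j.1, h⟩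
    have hne : (Finset.univ.filter fun i => 0 < c i).Nonempty := ⟨j0, by simp [hj0]⟩
    obtain ⟨i₀, hi₀mem, hi₀min⟩ := Finset.exists_min_image _ (fun i => μ i / c i) hne
    have hci₀ : 0 < c i₀ := by simpa using hi₀mem
    set τ := μ i₀ / c i₀ with hτ
    have hτ0 : 0 ≤ τ := div_nonneg (hμ0 i₀) hci₀.le
    set ν : ι → ℝ := fun i => μ i - τ * c i with hν
    have hν0 : ∀ i, 0 ≤ ν i := by
      intro i
      show (0:ℝ) ≤ μ i - τ * c i
      rcases lt_trichotomy (c i) 0 with h | h | h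
      · nlinarith [hμ0 i]
      · simp [h, hμ0 i]
      · have h1 : τ ≤ μ i / c i := hi₀min i (by simp [h])
        have h2 := (le_div_iff₀ h).mp h1
        linarith
    have hνsupp : ∀ i, μ i = 0 → ν i = 0 := by
      intro i h
      have hc : c i = 0 := by
        by_contra hc
        exact (hcsupp i hc) h
      show μ i - τ * c i = 0
      rw [h, hc, mul_zero, sub_zero]
    have hνi₀ : ν i₀ = 0 := by
      show μ i₀ - τ * c i₀ = 0
      rw [hτ, div_mul_cancel₀ _ hci₀.ne']
      exact sub_self _
    have hνsum : ∑ i, ν i • a i = ∑ i, μ i • a i := by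
      have hpt : ∀ i, ν i • a i = μ i • a i - τ • (c i • a i) := by
        intro i
        show (μ i - τ * c i) • a i = _
        rw [sub_smul, smul_smul]
      rw [Finset.sum_congr rfl fun i _ => hpt i, Finset.sum_sub_distrib, ← Finset.smul_sum,
        hcsum, smul_zero, sub_zero]
    have hμi₀ : μ i₀ ≠ 0 := hcsupp i₀ hci₀.ne'
    have hsubset : (Finset.univ.filter fun i => ν i ≠ 0) ⊆
        (Finset.univ.filter fun i => μ i ≠ 0).erase i₀ := by
      intro i hi
      simp only [Finset.mem_filter, Finset.mem_univ, true_and] at hi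
      rw [Finset.mem_erase]
      refine ⟨?_, ?_⟩
      · rintro rfl
        exact hi hνi₀
      · simp only [Finset.mem_filter, Finset.mem_univ, true_and]
        intro h
        exact hi (hνsupp i h)
    have hcard' : (Finset.univ.filter fun i => ν i ≠ 0).card ≤ N := by
      have h1 := Finset.card_le_card hsubset
      have h2 : i₀ ∈ (Finset.univ.filter fun i => μ i ≠ 0) := by simp [hμi₀]
      have h3 := Finset.card_pos.mpr ⟨i₀, h2⟩
      rw [Finset.card_erase_of_mem h2] at h1
      omega
    obtain ⟨ν', h1, h2, h3, h4⟩ := ih ν hcard' hν0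
    exact ⟨ν', h1, fun i h => h2 i (hνsupp i h), h3.trans hνsum, h4⟩

/-- The linear map sending coefficients to the corresponding combination. -/
private def comboMap {ι : Type*} [Fintype ι] (a : ι → E) : (ι → ℝ) →ₗ[ℝ] E where
  toFun μ := ∑ i, μ i • a i
  map_add' x y := by simp [add_smul, Finset.sum_add_distrib]
  map_smul' c x := by simp [mul_smul, Finset.smul_sum]

private lemma comboMap_inj {ι : Type*} [Fintype ι] {a : ι → E} {s : Finset ι}
    (hs : LinearIndependent ℝ (fun i : s => a i)) :
    Function.Injective (comboMap (fun i : s => a ↑i)) := by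
  rw [← LinearMap.ker_eq_bot]
  rw [LinearMap.ker_eq_bot']
  intro g hg
  exact funext (Fintype.linearIndependent_iff.mp hs g hg)

private lemma li_filter_of_li {ι : Type*} [Fintype ι] (a : ι → E) (ν : ι → ℝ)
    [DecidablePred fun i => ν i ≠ 0]
    (h : LinearIndependent ℝ (fun i : {i // ν i ≠ 0} => a i)) :
    LinearIndependent ℝ (fun i : (Finset.univ.filter fun i => ν i ≠ 0) => a i) := by
  have hinj : Function.Injective
      (fun i : {i : ι // i ∈ Finset.univ.filter fun i => ν i ≠ 0} =>
        (⟨↑i, (Finset.mem_filter.mp i.2).2⟩ : {i // ν i ≠ 0})) := by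
    intro i j hij
    apply Subtype.ext
    have h := congrArg Subtype.val hij
    simpa using h
  exact h.comp _ hinj

/-- A finitely generated cone is closed. -/
lemma isClosed_coneOf {ι : Type*} [Fintype ι] (a : ι → E) : IsClosed (coneOf a) := by
  classical
  have hrw : coneOf a = ⋃ s ∈ {s : Finset ι | LinearIndependent ℝ (fun i : s => a i)},
      (comboMap (fun i : s => a ↑i)) '' {l : s → ℝ | ∀ i, 0 ≤ l i} := by
    ext x
    simp only [Set.mem_iUnion, Set.mem_image, Set.mem_setOf_eq]
    constructor
    · rintro ⟨μ, hμ0, rfl⟩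
      obtain ⟨ν, hν0, hνz, hνsum, hνLI⟩ := caratheodory_cone a μ hμ0
      refine ⟨Finset.univ.filter fun i => ν i ≠ 0, li_filter_of_li a ν hνLI,
        fun i => ν ↑i, fun i => hν0 _, ?_⟩
      show ∑ i : (Finset.univ.filter fun i => ν i ≠ 0), ν ↑i • a ↑i = ∑ i, μ i • a i
      rw [← hνsum]
      exact sum_finset_subtype' _ (fun i => ν i • a i) (fun i hi => by
        show ν i • a i = 0
        have h0 : ν i = 0 := of_not_not (by simpa using hi)
        rw [h0, zero_smul])
    · rintro ⟨s, hsLI, l, hl0, rfl⟩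
      refine ⟨fun i => if h : i ∈ s then l ⟨i, h⟩ else 0, fun i => ?_, ?_⟩
      · show (0:ℝ) ≤ if h : i ∈ s then l ⟨i, h⟩ else 0
        split
        · exact hl0 _
        · exact le_rfl
      · show ∑ i, (if h : i ∈ s then l ⟨i, h⟩ else 0) • a i = ∑ i : s, l i • a ↑i
        rw [← sum_finset_subtype' s (fun i => (if h : i ∈ s then l ⟨i, h⟩ else 0) • a i)
          (fun i hi => by
            show (if h : i ∈ s then l ⟨i, h⟩ else 0) • a i = 0
            rw [dif_neg hi, zero_smul])]
        apply Fintype.sum_congr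
        intro i
        show (if h : (i : ι) ∈ s then l ⟨↑i, h⟩ else 0) • a ↑i = l i • a ↑i
        rw [dif_pos i.2, Subtype.coe_eta]
  rw [hrw]
  apply Set.Finite.isClosed_biUnion (Set.toFinite _)
  intro s hs
  have hclosed :=
    LinearMap.isClosedEmbedding_of_injective (LinearMap.ker_eq_bot.mpr (comboMap_inj hs))
  apply hclosed.isClosedMap
  have hsets : {l : s → ℝ | ∀ i, 0 ≤ l i} = ⋂ i, {l : s → ℝ | 0 ≤ l i} := by
    ext l
    simp [Set.mem_iInter]
  rw [hsets]
  exact isClosed_iInter fun i => isClosed_le continuous_const (continuous_apply i)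

/-- The finitely generated cone as a `ConvexCone`. -/
private def coneOfCC {ι : Type*} [Fintype ι] (a : ι → E) : ConvexCone ℝ E where
  carrier := coneOf a
  smul_mem' c hc x hx := coneOf_smul_mem a hc.le hx
  add_mem' x hx y hy := coneOf_add_mem a hx hy

/-- Farkas' lemma. -/
lemma farkas_cone {ι : Type*} [Fintype ι] [CompleteSpace E] (a : ι → E) (v : E)
    (hv : ∀ w : E, (∀ i, ⟪a i, w⟫_ℝ ≤ 0) → ⟪v, w⟫_ℝ ≤ 0) : v ∈ coneOf a := by
  classical
  by_contra hvn
  have hconvc : Convex ℝ (coneOf a) := by exact (coneOfCC a).convex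
  obtain ⟨f, u, hf, hfv⟩ := geometric_hahn_banach_closed_point hconvc (isClosed_coneOf a) hvn
  have hu : 0 < u := by simpa using hf 0 (zero_mem_coneOf a)
  have hfle : ∀ z ∈ coneOf a, f z ≤ 0 := by
    intro z hz
    by_contra hpos
    push_neg at hpos
    have := hf ((u / f z) • z) (coneOf_smul_mem a (div_pos hu hpos).le hz)
    rw [map_smul, smul_eq_mul, div_mul_cancel₀ _ hpos.ne'] at this
    exact lt_irrefl _ this
  set w := (InnerProductSpace.toDual ℝ E).symm f
  have hdf : ∀ z, ⟪w, z⟫_ℝ = f z := fun z => InnerProductSpace.toDual_symm_apply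
  have h1 : ∀ i, ⟪a i, w⟫_ℝ ≤ 0 := fun i => by
    rw [real_inner_comm, hdf]
    exact hfle _ (generator_mem_coneOf a i)
  have h2 := hv w h1
  rw [real_inner_comm, hdf] at h2
  linarith

/-- The coefficient bound for linearly independent families. -/
private lemma exists_kappa {ι : Type*} [Fintype ι] (a : ι → E) (s : Finset ι)
    (h : LinearIndependent ℝ (fun i : s => a i)) :
    ∃ κ : ℝ, 0 ≤ κ ∧ ∀ ν : ι → ℝ, (∀ i ∉ s, ν i = 0) →
      ∑ i, |ν i| ≤ κ * ‖∑ i, ν i • a i‖ := by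
  classical
  set T := comboMap (fun i : s => a ↑i) with hT
  have hinj : Function.Injective T := comboMap_inj h
  set e := LinearEquiv.ofInjective T hinj with he
  haveI : FiniteDimensional ℝ (↥(LinearMap.range T)) := T.finiteDimensional_range
  set L := LinearMap.toContinuousLinearMap (e.symm : ↥(LinearMap.range T) →ₗ[ℝ] (↥s → ℝ)) with hL
  refine ⟨(s.card : ℝ) * ‖L‖, by positivity, ?_⟩
  intro ν hν
  have key : ∀ i ∈ s, |ν i| ≤ ‖L‖ * ‖∑ j, ν j • a j‖ := by
    intro i hi
    set lam : ↥s → ℝ := fun j => ν ↑j with hlam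
    have hTlam : T lam = ∑ j, ν j • a j := by
      show ∑ j : s, ν ↑j • a ↑j = _
      exact sum_finset_subtype' s (fun j => ν j • a j)
        (fun j hj => by
          show ν j • a j = 0
          rw [hν j hj, zero_smul])
    have h1 : L (e lam) = lam := by
      show (e.symm : ↥(LinearMap.range T) →ₗ[ℝ] (↥s → ℝ)) (e lam) = lam
      exact e.symm_apply_apply lam
    have h2 : ‖(e lam : E)‖ = ‖T lam‖ := by
      congr 1
    calc |ν i| = ‖lam ⟨i, hi⟩‖ := (Real.norm_eq_abs _).symm
      _ ≤ ‖lam‖ := norm_le_pi_norm lam ⟨i, hi⟩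
      _ = ‖L (e lam)‖ := by rw [h1]
      _ ≤ ‖L‖ * ‖e lam‖ := L.le_opNorm _
      _ = ‖L‖ * ‖T lam‖ := by
          have h2' : ‖e lam‖ = ‖T lam‖ := by rw [← h2, Submodule.coe_norm]
          rw [h2']
      _ = ‖L‖ * ‖∑ j, ν j • a j‖ := by rw [hTlam]
  calc ∑ i, |ν i| = ∑ i ∈ s, |ν i| := by
        refine (Finset.sum_subset s.subset_univ fun i _ hi => by rw [hν i hi, abs_zero]).symm
    _ ≤ s.card • (‖L‖ * ‖∑ j, ν j • a j‖) := Finset.sum_le_card_nsmul s _ _ key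
    _ = (s.card : ℝ) * ‖L‖ * ‖∑ j, ν j • a j‖ := by
        rw [nsmul_eq_mul]; ring

/-- Hoffman-type error bound for homogeneous systems of linear inequalities. -/
lemma hoffman_bound {ι : Type*} [Fintype ι] [FiniteDimensional ℝ E] (b : ι → E) :
    ∃ γ : ℝ, 0 ≤ γ ∧ ∀ x : E, ∃ p : E, (∀ i, ⟪b i, p⟫_ℝ ≤ 0) ∧
      ‖x - p‖ ≤ γ * ∑ i, max ⟪b i, x⟫_ℝ 0 := by
  classical
  have hexk : ∀ s : Finset ι, ∃ κ : ℝ, 0 ≤ κ ∧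
      (LinearIndependent ℝ (fun i : s => b i) → ∀ ν : ι → ℝ, (∀ i ∉ s, ν i = 0) →
        ∑ i, |ν i| ≤ κ * ‖∑ i, ν i • b i‖) := by
    intro s
    by_cases hs : LinearIndependent ℝ (fun i : s => b i)
    · obtain ⟨κ, h0, hκ⟩ := exists_kappa b s hs
      exact ⟨κ, h0, fun _ => hκ⟩
    · exact ⟨0, le_rfl, fun h => absurd h hs⟩
  choose κ hκ0 hκ using hexk
  set γ := ∑ s : Finset ι, κ s with hγ
  have hγ0 : 0 ≤ γ := Finset.sum_nonneg fun s _ => hκ0 s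
  have hκγ : ∀ s : Finset ι, κ s ≤ γ := fun s =>
    Finset.single_le_sum (fun s _ => hκ0 s) (Finset.mem_univ s)
  refine ⟨γ, hγ0, ?_⟩
  intro x
  set K : Set E := {y | ∀ i, ⟪b i, y⟫_ℝ ≤ 0} with hKdef
  have hKne : K.Nonempty := ⟨0, fun i => by simp⟩
  have hKconv : Convex ℝ K := by
    intro y hy z hz α β hα hβ hαβ
    intro i
    have h1 := hy i
    have h2 := hz i
    show ⟪b i, α • y + β • z⟫_ℝ ≤ 0
    rw [inner_add_right, real_inner_smul_right, real_inner_smul_right]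
    nlinarith
  have hKclosed : IsClosed K := by
    have hKrw : K = ⋂ i, {y : E | ⟪b i, y⟫_ℝ ≤ 0} := by
      ext y
      simp [hKdef, Set.mem_iInter]
    rw [hKrw]
    exact isClosed_iInter fun i =>
      isClosed_le (Continuous.inner continuous_const continuous_id) continuous_const
  obtain ⟨p, hpK, hproj⟩ :=
    exists_norm_eq_iInf_of_complete_convex hKne hKclosed.isComplete hKconv x
  have hvar : ∀ w ∈ K, ⟪x - p, w - p⟫_ℝ ≤ 0 :=
    (norm_eq_iInf_iff_real_inner_le_zero hKconv hpK).mp hproj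
  set v := x - p with hv
  set A : Finset ι := Finset.univ.filter fun i => ⟪b i, p⟫_ℝ = 0 with hA
  have hActive : ∀ i ∉ A, ⟪b i, p⟫_ℝ < 0 := fun i hi =>
    lt_of_le_of_ne (hpK i) (by simpa [hA] using hi)
  have hvcone : v ∈ coneOf (fun i : A => b ↑i) := by
    haveI : CompleteSpace E := FiniteDimensional.complete ℝ E
    apply farkas_cone
    intro w hw
    obtain ⟨t, ht0, htK⟩ : ∃ t : ℝ, 0 < t ∧ p + t • w ∈ K := by
      set J : Finset ι := Finset.univ.filter fun i => 0 < ⟪b i, w⟫_ℝ with hJ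
      rcases J.eq_empty_or_nonempty with hJe | hJne
      · refine ⟨1, one_pos, fun i => ?_⟩
        have hwi : ⟪b i, w⟫_ℝ ≤ 0 := by
          by_contra hcon
          push_neg at hcon
          have hmem : i ∈ J := by simp [hJ, hcon]
          rw [hJe] at hmem
          simp at hmem
        show ⟪b i, p + 1 • w⟫_ℝ ≤ 0
        rw [inner_add_right, real_inner_smul_right]
        have := hpK i
        nlinarith
      · obtain ⟨i₁, hi₁J, hi₁min⟩ :=
          Finset.exists_min_image J (fun i => -⟪b i, p⟫_ℝ / ⟪b i, w⟫_ℝ) hJne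
        have hw₁ : 0 < ⟪b i₁, w⟫_ℝ := by simpa [hJ] using hi₁J
        have hi₁A : i₁ ∉ A := by
          intro hmem
          have := hw ⟨i₁, hmem⟩
          dsimp only at this
          linarith
        have hp₁ : ⟪b i₁, p⟫_ℝ < 0 := hActive i₁ hi₁A
        refine ⟨-⟪b i₁, p⟫_ℝ / ⟪b i₁, w⟫_ℝ, div_pos (by linarith) hw₁, ?_⟩
        intro i
        show ⟪b i, p + (-⟪b i₁, p⟫_ℝ / ⟪b i₁, w⟫_ℝ) • w⟫_ℝ ≤ 0
        rw [inner_add_right, real_inner_smul_right]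
        rcases le_or_gt ⟪b i, w⟫_ℝ 0 with hwi | hwi
        · have h1 : -⟪b i₁, p⟫_ℝ / ⟪b i₁, w⟫_ℝ * ⟪b i, w⟫_ℝ ≤ 0 :=
            mul_nonpos_of_nonneg_of_nonpos (div_pos (by linarith) hw₁).le hwi
          have := hpK i
          linarith
        · have hiJ : i ∈ J := by simp [hJ, hwi]
          have hle := hi₁min i hiJ
          have h1 := (le_div_iff₀ hwi).mp hle
          linarith
    have h2 := hvar (p + t • w) htK
    rw [add_sub_cancel_left, real_inner_smul_right] at h2
    nlinarith
  obtain ⟨μA, hμA0, hμAsum⟩ := hvcone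
  set μ : ι → ℝ := fun i => if h : i ∈ A then μA ⟨i, h⟩ else 0 with hμ
  have hμ0 : ∀ i, 0 ≤ μ i := by
    intro i
    show (0:ℝ) ≤ if h : i ∈ A then μA ⟨i, h⟩ else 0
    split
    · exact hμA0 _
    · exact le_rfl
  have hμsupp : ∀ i, μ i ≠ 0 → i ∈ A := by
    intro i hi
    by_contra h
    apply hi
    show (if h : i ∈ A then μA ⟨i, h⟩ else 0) = 0
    rw [dif_neg h]
  have hμsum : ∑ i, μ i • b i = v := by
    rw [← sum_finset_subtype' A (fun i => μ i • b i) (fun i hi => by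
      show μ i • b i = 0
      have h0 : μ i = 0 := by
        show (if h : i ∈ A then μA ⟨i, h⟩ else 0) = 0
        rw [dif_neg hi]
      rw [h0, zero_smul])]
    rw [← hμAsum]
    apply Fintype.sum_congr
    intro i
    show μ ↑i • b ↑i = μA i • b ↑i
    have h0 : μ ↑i = μA i := by
      show (if h : (i : ι) ∈ A then μA ⟨↑i, h⟩ else 0) = μA i
      rw [dif_pos i.2, Subtype.coe_eta]
    rw [h0]
  obtain ⟨ν, hν0, hνz, hνsum, hνLI⟩ := caratheodory_cone b μ hμ0
  set s : Finset ι := Finset.univ.filter fun i => ν i ≠ 0 with hs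
  have hsLI : LinearIndependent ℝ (fun i : s => b i) := li_filter_of_li b ν hνLI
  have hνs : ∀ i ∉ s, ν i = 0 := fun i hi => of_not_not (by simpa [hs] using hi)
  have hiA : ∀ i, ν i ≠ 0 → i ∈ A := fun i hi => hμsupp i fun h => hi (hνz i h)
  have hκs := hκ s hsLI ν hνs
  set S := ∑ i, max ⟪b i, x⟫_ℝ 0 with hS
  have hS0 : 0 ≤ S := Finset.sum_nonneg fun i _ => le_max_right _ _
  have hvv : ∑ i, ν i • b i = v := hνsum.trans hμsum
  have hnormsq : ‖v‖ ^ 2 ≤ γ * ‖v‖ * S := by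
    have h1 : ‖v‖ ^ 2 = ⟪v, v⟫_ℝ := (real_inner_self_eq_norm_sq v).symm
    have h2 : ⟪(∑ i, ν i • b i : E), v⟫_ℝ = ∑ i, ν i * ⟪b i, v⟫_ℝ := by
      rw [sum_inner]
      exact Finset.sum_congr rfl fun i _ => real_inner_smul_left _ _ _
    rw [hvv] at h2
    have h3 : ∀ i, ν i * ⟪b i, v⟫_ℝ ≤ ν i * S := by
      intro i
      rcases eq_or_ne (ν i) 0 with h | h
      · simp [h]
      · have hiA' := hiA i h
        have hbp : ⟪b i, p⟫_ℝ = 0 := by simpa [hA] using hiA'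
        have hbv : ⟪b i, v⟫_ℝ = ⟪b i, x⟫_ℝ := by
          rw [hv, inner_sub_right, hbp, sub_zero]
        rw [hbv]
        refine mul_le_mul_of_nonneg_left ?_ (hν0 i)
        calc ⟪b i, x⟫_ℝ ≤ max ⟪b i, x⟫_ℝ 0 := le_max_left _ _
          _ ≤ S := by
              rw [hS]
              exact Finset.single_le_sum (f := fun j => max ⟪b j, x⟫_ℝ 0)
                (fun j _ => le_max_right _ _) (Finset.mem_univ i)
    calc ‖v‖ ^ 2 = ∑ i, ν i * ⟪b i, v⟫_ℝ := h1.trans h2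
      _ ≤ ∑ i, ν i * S := Finset.sum_le_sum fun i _ => h3 i
      _ = (∑ i, ν i) * S := by rw [Finset.sum_mul]
      _ ≤ (∑ i, |ν i|) * S := by
          refine mul_le_mul_of_nonneg_right ?_ hS0
          exact Finset.sum_le_sum fun i _ => le_abs_self _
      _ ≤ (κ s * ‖∑ i, ν i • b i‖) * S := mul_le_mul_of_nonneg_right hκs hS0
      _ = (κ s * ‖v‖) * S := by rw [hvv]
      _ ≤ (γ * ‖v‖) * S := by
          refine mul_le_mul_of_nonneg_right
            (mul_le_mul_of_nonneg_right (hκγ s) (norm_nonneg _)) hS0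
      _ = γ * ‖v‖ * S := rfl
  refine ⟨p, hpK, ?_⟩
  rcases eq_or_lt_of_le (norm_nonneg v) with h0 | h0
  · show ‖v‖ ≤ γ * S
    rw [← h0]
    positivity
  · show ‖v‖ ≤ γ * S
    have h1 : ‖v‖ * ‖v‖ ≤ (γ * S) * ‖v‖ := by nlinarith
    exact le_of_mul_le_mul_right h1 h0

end ConeAux

/-- The real-valued support function (only used on directions where it is finite). -/
private noncomputable def suppR {n : ℕ} (C : Set (EuclideanSpace ℝ (Fin n)))
    (d : EuclideanSpace ℝ (Fin n)) : ℝ :=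
  sSup ((fun x => ⟪d, x⟫_ℝ) '' C)

set_option maxHeartbeats 1000000 in
/-- if the recession cone of `C` is polyhedral, then `C` is
approximately M-decomposable if and only if it is hyperbolic. -/
theorem approxMDecomposable_iff_hyperbolic_of_polyhedral_recCone {n : ℕ}
    (C : Set (EuclideanSpace ℝ (Fin n)))
    (hne : C.Nonempty) (hcl : IsClosed C) (hconv : Convex ℝ C)
    (hpoly : IsPolyhedralCone (recCone C)) :
    ApproxMDecomposable C ↔ Hyperbolic C := by
  classical
  obtain ⟨m, a, hK⟩ := hpoly
  constructor
  · -- easy direction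
    intro h
    obtain ⟨r, hr, hsub⟩ := h 1 one_pos
    refine ⟨(C ∩ closedBall 0 r) + closedBall 0 1,
      ((isCompact_closedBall (0 : EuclideanSpace ℝ (Fin n)) r).inter_left hcl).add
        (isCompact_closedBall 0 1),
      (hconv.inter (convex_closedBall _ _)).add (convex_closedBall _ _), ?_⟩
    intro x hx
    have h2 := hsub hx
    rw [trunc, add_right_comm] at h2
    exact h2
  · -- hard direction
    intro hhyp
    obtain ⟨M, hMc, hMconv, hMsub⟩ := hhyp
    intro ε hε
    obtain ⟨c₀, hc₀⟩ := id hne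
    obtain ⟨ρ₀, hρ₀⟩ := hMc.isBounded.subset_closedBall 0
    set ρ := max ρ₀ 0 with hρ
    have hρ0 : 0 ≤ ρ := le_max_right _ _
    have hMρ : ∀ y ∈ M, ‖y‖ ≤ ρ := fun y hy =>
      le_trans (mem_closedBall_zero_iff.mp (hρ₀ hy)) (le_max_left _ _)
    have hmemK : ∀ k : EuclideanSpace ℝ (Fin n),
        k ∈ recCone C ↔ ∀ i, ⟪a i, k⟫_ℝ ≤ 0 := fun k => by rw [hK]; exact Iff.rfl
    have h0K : (0 : EuclideanSpace ℝ (Fin n)) ∈ recCone C :=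
      (hmemK 0).mpr fun i => by simp
    have hKconv : Convex ℝ (recCone C) := by
      intro y hy z hz α β hα hβ hαβ
      rw [hmemK] at hy hz ⊢
      intro i
      have h1 := hy i
      have h2 := hz i
      rw [inner_add_right, real_inner_smul_right, real_inner_smul_right]
      nlinarith
    have hKclosed : IsClosed (recCone C) := by
      rw [hK]
      have hrw : {x : EuclideanSpace ℝ (Fin n) | ∀ i, ⟪a i, x⟫_ℝ ≤ 0} =
          ⋂ i, {x : EuclideanSpace ℝ (Fin n) | ⟪a i, x⟫_ℝ ≤ 0} := by
        ext x
        simp [Set.mem_iInter]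
      rw [hrw]
      exact isClosed_iInter fun i =>
        isClosed_le (Continuous.inner continuous_const continuous_id) continuous_const
    have hKsmul : ∀ t : ℝ, 0 ≤ t → ∀ k ∈ recCone C, t • k ∈ recCone C := by
      intro t ht k hk
      rw [hmemK] at hk ⊢
      intro i
      rw [real_inner_smul_right]
      exact mul_nonpos_of_nonneg_of_nonpos ht (hk i)
    have hpolar : ∀ d ∈ coneOf a, ∀ k ∈ recCone C, ⟪d, k⟫_ℝ ≤ 0 := fun d hd k hk =>
      inner_le_zero_of_mem_coneOf hd ((hmemK k).mp hk)
    have hpt : ∀ d ∈ coneOf a, ∀ x ∈ C, ⟪d, x⟫_ℝ ≤ ‖d‖ * ρ := by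
      intro d hd x hx
      obtain ⟨y, hy, k, hk, hyk⟩ := Set.mem_add.mp (hMsub hx)
      rw [← hyk, inner_add_right]
      have h1 : ⟪d, y⟫_ℝ ≤ ‖d‖ * ‖y‖ := real_inner_le_norm d y
      have h2 := hpolar d hd k hk
      have h3 := hMρ y hy
      nlinarith [norm_nonneg d]
    have hσle : ∀ d ∈ coneOf a, ∀ x ∈ C, ⟪d, x⟫_ℝ ≤ suppR C d := by
      intro d hd x hx
      rw [suppR]
      exact le_csSup ⟨‖d‖ * ρ, by rintro z ⟨x', hx', rfl⟩; exact hpt d hd x' hx'⟩ ⟨x, hx, rfl⟩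
    have hσub : ∀ d ∈ coneOf a, suppR C d ≤ ‖d‖ * ρ := by
      intro d hd
      rw [suppR]
      refine csSup_le (hne.image _) ?_
      rintro z ⟨x, hx, rfl⟩
      exact hpt d hd x hx
    -- upper semicontinuity of suppR C on the polar cone
    have husc : ∀ d₀, d₀ ∈ coneOf a → ‖d₀‖ = 1 → ∀ η : ℝ, 0 < η →
        ∃ δ : ℝ, 0 < δ ∧ ∀ d, d ∈ coneOf a → ‖d‖ = 1 → ‖d - d₀‖ < δ → suppR C d ≤ suppR C d₀ + η := by
      intro d₀ hd₀ hd₀n η hη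
      set bfam : (Fin m ⊕ Bool) → EuclideanSpace ℝ (Fin n) :=
        Sum.elim a (fun s : Bool => cond s d₀ (-d₀)) with hbfam
      obtain ⟨γ, hγ0, hγ⟩ := hoffman_bound bfam
      set β := ρ + ‖c₀‖ with hβ
      have hβ0 : 0 ≤ β := by positivity
      have hσd₀_le : suppR C d₀ ≤ ρ := by
        have h := hσub d₀ hd₀
        rwa [hd₀n, one_mul] at h
      have hσd₀_ge : -β ≤ suppR C d₀ := by
        have h1 := hσle d₀ hd₀ c₀ hc₀
        have h2 : -(‖d₀‖ * ‖c₀‖) ≤ ⟪d₀, c₀⟫_ℝ := by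
          have h3 := abs_real_inner_le_norm d₀ c₀
          have h4 := neg_abs_le ⟪d₀, c₀⟫_ℝ
          linarith
        rw [hd₀n, one_mul] at h2
        rw [hβ]
        linarith
      set η' := min 1 (η / (β + 2 * ρ + 1)) with hη'
      have hη'0 : 0 < η' := lt_min one_pos (div_pos hη (by positivity))
      have hη'1 : η' ≤ 1 := min_le_left _ _
      set δ := η' / (γ + 1) with hδ
      have hδ0 : 0 < δ := div_pos hη'0 (by positivity)
      have hδη' : δ ≤ η' := by
        rw [hδ]
        exact div_le_self hη'0.le (by linarith)
      refine ⟨δ, hδ0, ?_⟩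
      intro d hd hdn hdd₀
      set w := d - (1 - η') • d₀ with hw
      have hwrw : w = (d - d₀) + η' • d₀ := by
        rw [hw, sub_smul, one_smul]
        abel
      have hwnorm : ‖w‖ ≤ δ + η' := by
        rw [hwrw]
        calc ‖(d - d₀) + η' • d₀‖ ≤ ‖d - d₀‖ + ‖η' • d₀‖ := norm_add_le _ _
          _ ≤ δ + η' := by
              rw [norm_smul, hd₀n, mul_one, Real.norm_eq_abs, abs_of_pos hη'0]
              exact add_le_add hdd₀.le le_rfl
      have hwk : ∀ k ∈ recCone C, ⟪w, k⟫_ℝ ≤ 0 := by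
        intro k hk
        obtain ⟨p, hp, hdist⟩ := hγ k
        have hd₀k : ⟪d₀, k⟫_ℝ ≤ 0 := hpolar d₀ hd₀ k hk
        have h1 : ∀ i : Fin m, max ⟪bfam (Sum.inl i), k⟫_ℝ 0 = 0 := by
          intro i
          simp only [hbfam, Sum.elim_inl]
          exact max_eq_right ((hmemK k).mp hk i)
        have hTb : max ⟪bfam (Sum.inr true), k⟫_ℝ 0 = 0 := by
          simp only [hbfam, Sum.elim_inr, Bool.cond_true]
          exact max_eq_right hd₀k
        have hFb : max ⟪bfam (Sum.inr false), k⟫_ℝ 0 = -⟪d₀, k⟫_ℝ := by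
          simp only [hbfam, Sum.elim_inr, Bool.cond_false]
          rw [inner_neg_left]
          exact max_eq_left (neg_nonneg.mpr hd₀k)
        have hsum : ∑ j, max ⟪bfam j, k⟫_ℝ 0 = -⟪d₀, k⟫_ℝ := by
          rw [Fintype.sum_sum_type, Finset.sum_congr rfl fun i _ => h1 i,
            Finset.sum_const_zero, zero_add, Fintype.sum_bool, hTb, hFb, zero_add]
        have hpK' : p ∈ recCone C := (hmemK p).mpr fun i => by
          have := hp (Sum.inl i)
          simpa [hbfam] using this
        have hpd₀ : ⟪d₀, p⟫_ℝ = 0 := by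
          have hh1 := hp (Sum.inr true)
          have hh2 := hp (Sum.inr false)
          simp only [hbfam, Sum.elim_inr, Bool.cond_true, Bool.cond_false,
            inner_neg_left] at hh1 hh2
          linarith
        have hdp : ⟪d, p⟫_ℝ ≤ 0 := hpolar d hd p hpK'
        have hsplit : ⟪d - d₀, k⟫_ℝ = ⟪d - d₀, k - p⟫_ℝ + ⟪d - d₀, p⟫_ℝ := by
          rw [← inner_add_right, sub_add_cancel]
        have h5 : ⟪d - d₀, k - p⟫_ℝ ≤ ‖d - d₀‖ * ‖k - p‖ := real_inner_le_norm _ _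
        have hkp : ‖k - p‖ ≤ γ * -⟪d₀, k⟫_ℝ := by
          rw [← hsum]
          exact hdist
        have h6 : ‖d - d₀‖ * ‖k - p‖ ≤ δ * (γ * -⟪d₀, k⟫_ℝ) :=
          mul_le_mul hdd₀.le hkp (norm_nonneg _) hδ0.le
        have h7 : ⟪d - d₀, p⟫_ℝ ≤ 0 := by
          rw [inner_sub_left, hpd₀]
          linarith
        have h8 : ⟪w, k⟫_ℝ = ⟪d - d₀, k⟫_ℝ + η' * ⟪d₀, k⟫_ℝ := by
          rw [hwrw, inner_add_left, real_inner_smul_left]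
        have h9 : δ * γ ≤ η' := by
          rw [hδ, div_mul_eq_mul_div, div_le_iff₀ (by positivity)]
          nlinarith
        have h10 : δ * (γ * -⟪d₀, k⟫_ℝ) ≤ η' * -⟪d₀, k⟫_ℝ := by
          calc δ * (γ * -⟪d₀, k⟫_ℝ) = (δ * γ) * -⟪d₀, k⟫_ℝ := by ring
            _ ≤ η' * -⟪d₀, k⟫_ℝ := mul_le_mul_of_nonneg_right h9 (neg_nonneg.mpr hd₀k)
        have h11 : η' * -⟪d₀, k⟫_ℝ + η' * ⟪d₀, k⟫_ℝ = 0 := by ring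
        rw [h8, hsplit]
        linarith
      have hmain : suppR C d ≤ (1 - η') * suppR C d₀ + (δ + η') * ρ := by
        have hgoal : ∀ x ∈ C, ⟪d, x⟫_ℝ ≤ (1 - η') * suppR C d₀ + (δ + η') * ρ := by
          intro x hx
          obtain ⟨y, hy, k, hk, hyk⟩ := Set.mem_add.mp (hMsub hx)
          have hxd : ⟪d, x⟫_ℝ = (1 - η') * ⟪d₀, x⟫_ℝ + ⟪w, x⟫_ℝ := by
            rw [hw, inner_sub_left, real_inner_smul_left]
            ring
          have hwx : ⟪w, x⟫_ℝ ≤ (δ + η') * ρ := by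
            rw [← hyk, inner_add_right]
            have h1 : ⟪w, y⟫_ℝ ≤ ‖w‖ * ‖y‖ := real_inner_le_norm _ _
            have h2 := hwk k hk
            have h3 := hMρ y hy
            have h4 : ‖w‖ * ‖y‖ ≤ (δ + η') * ρ := by
              have h5 := norm_nonneg w
              have h6 := norm_nonneg y
              nlinarith
            linarith
          have hd₀x : ⟪d₀, x⟫_ℝ ≤ suppR C d₀ := hσle d₀ hd₀ x hx
          have h1η' : (0:ℝ) ≤ 1 - η' := by linarith
          have h12 := mul_le_mul_of_nonneg_left hd₀x h1η'
          rw [hxd]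
          linarith
        rw [suppR]
        refine csSup_le (hne.image _) ?_
        rintro z ⟨x, hx, rfl⟩
        exact hgoal x hx
      have hfin : (1 - η') * suppR C d₀ + (δ + η') * ρ ≤ suppR C d₀ + η := by
        have h2 : -(η' * suppR C d₀) ≤ η' * β := by nlinarith
        have h3 : (δ + η') * ρ ≤ 2 * η' * ρ := by nlinarith
        have h4 : η' * (β + 2 * ρ) ≤ η := by
          have h5 : η' ≤ η / (β + 2 * ρ + 1) := min_le_right _ _
          have h6 : (0:ℝ) < β + 2 * ρ + 1 := by positivity
          rw [le_div_iff₀ h6] at h5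
          nlinarith
        have hid : (1 - η') * suppR C d₀ = suppR C d₀ - η' * suppR C d₀ := by ring
        have hid2 : η' * (β + 2 * ρ) = η' * β + 2 * η' * ρ := by ring
        linarith
      exact hmain.trans hfin
    -- compactness cover
    set QS := coneOf a ∩ sphere (0 : EuclideanSpace ℝ (Fin n)) 1 with hQS
    have hQScomp : IsCompact QS := (isCompact_sphere 0 1).inter_left (isClosed_coneOf a)
    have hy : ∀ q : QS, ∃ y, y ∈ C ∧ suppR C ↑q - ε / 3 < ⟪(q : EuclideanSpace ℝ (Fin n)), y⟫_ℝ := by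
      intro q
      have hlt : suppR C ↑q - ε / 3 < suppR C ↑q := by linarith
      rw [suppR] at hlt
      obtain ⟨z, ⟨x, hx, rfl⟩, hz⟩ := exists_lt_of_lt_csSup (hne.image _) hlt
      refine ⟨x, hx, ?_⟩
      rw [suppR]
      exact hz
    have hδex : ∀ q : QS, ∃ δ : ℝ, 0 < δ ∧ ∀ d, d ∈ coneOf a → ‖d‖ = 1 →
        ‖d - ↑q‖ < δ → suppR C d ≤ suppR C ↑q + ε / 3 := fun q =>
      husc ↑q q.2.1 (mem_sphere_zero_iff_norm.mp q.2.2) (ε / 3) (by linarith)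
    choose y hyC hyσ using hy
    choose δ₁ hδ₁0 hδ₁ using hδex
    set δ' : QS → ℝ := fun q => min (δ₁ q) (ε / (3 * (‖y q‖ + 1))) with hδ'
    have hδ'0 : ∀ q, 0 < δ' q := fun q => lt_min (hδ₁0 q) (by positivity)
    have hcover : QS ⊆ ⋃ q : QS, ball (↑q) (δ' q) := fun z hz =>
      Set.mem_iUnion.mpr ⟨⟨z, hz⟩, mem_ball_self (hδ'0 _)⟩
    obtain ⟨t, ht⟩ := hQScomp.elim_finite_subcover (fun q : QS => ball (↑q) (δ' q))
      (fun q => isOpen_ball) hcover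
    set r := 1 + ‖c₀‖ + ∑ q ∈ t, ‖y q‖ with hr
    have hsumy0 : 0 ≤ ∑ q ∈ t, ‖y q‖ := Finset.sum_nonneg fun q _ => norm_nonneg _
    have hr0 : 0 < r := by positivity
    have hrc₀ : ‖c₀‖ ≤ r := by rw [hr]; linarith
    have hry : ∀ q ∈ t, ‖y q‖ ≤ r := by
      intro q hq
      have h := Finset.single_le_sum (f := fun q => ‖y q‖)
        (fun q _ => norm_nonneg (y q)) hq
      rw [hr]
      have := norm_nonneg c₀
      linarith
    refine ⟨r, hr0, ?_⟩
    by_contra hnot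
    obtain ⟨x, hxC, hxD⟩ := Set.not_subset.mp hnot
    set D := trunc C r + closedBall 0 ε with hD
    have hDclosed : IsClosed D := by
      have hDrw : D = ((C ∩ closedBall 0 r) + closedBall 0 ε) + recCone C := by
        rw [hD, trunc]
        exact add_right_comm _ _ _
      rw [hDrw]
      exact hKclosed.add_left_of_isCompact
        (((isCompact_closedBall (0 : EuclideanSpace ℝ (Fin n)) r).inter_left hcl).add
          (isCompact_closedBall 0 ε))
    have hDconv : Convex ℝ D := by
      rw [hD, trunc]
      exact ((hconv.inter (convex_closedBall _ _)).add hKconv).add (convex_closedBall _ _)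
    obtain ⟨f, u, hfD, hfx⟩ := geometric_hahn_banach_closed_point hDconv hDclosed hxD
    set d := (InnerProductSpace.toDual ℝ (EuclideanSpace ℝ (Fin n))).symm f with hd
    have hdf : ∀ z, ⟪d, z⟫_ℝ = f z := fun z => InnerProductSpace.toDual_symm_apply
    have hmemD : ∀ z ∈ C ∩ closedBall 0 r, ∀ k ∈ recCone C,
        ∀ b ∈ closedBall (0 : EuclideanSpace ℝ (Fin n)) ε, z + k + b ∈ D := by
      intro z hz k hk b hb
      rw [hD, trunc]
      exact Set.add_mem_add (Set.add_mem_add hz hk) hb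
    have hc₀r : c₀ ∈ C ∩ closedBall 0 r := ⟨hc₀, mem_closedBall_zero_iff.mpr hrc₀⟩
    have hεball : (0 : EuclideanSpace ℝ (Fin n)) ∈ closedBall 0 ε := mem_closedBall_self hε.le
    have hc₀D : c₀ ∈ D := by
      have h := hmemD c₀ hc₀r 0 h0K 0 hεball
      rwa [add_zero, add_zero] at h
    have hfc₀ : f c₀ < u := hfD c₀ hc₀D
    have hdK : ∀ k ∈ recCone C, ⟪d, k⟫_ℝ ≤ 0 := by
      intro k hk
      by_contra hpos
      push_neg at hpos
      set T := (u - f c₀) / ⟪d, k⟫_ℝ with hT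
      have hT0 : 0 ≤ T := div_nonneg (by linarith) hpos.le
      have hTk : T • k ∈ recCone C := hKsmul T hT0 k hk
      have hmem := hmemD c₀ hc₀r (T • k) hTk 0 hεball
      rw [add_zero] at hmem
      have hlt := hfD _ hmem
      rw [map_add, map_smul, smul_eq_mul] at hlt
      have hfk : f k = ⟪d, k⟫_ℝ := (hdf k).symm
      rw [hfk] at hlt
      have hTeq : T * ⟪d, k⟫_ℝ = u - f c₀ := by
        rw [hT, div_mul_cancel₀ _ hpos.ne']
      linarith
    have hdQ : d ∈ coneOf a := farkas_cone a d fun w hw => hdK w ((hmemK w).mpr hw)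
    have hd0 : d ≠ 0 := by
      intro h
      have h1 : f c₀ = ⟪d, c₀⟫_ℝ := (hdf c₀).symm
      have h2 : f x = ⟪d, x⟫_ℝ := (hdf x).symm
      rw [h, inner_zero_left] at h1 h2
      have h3 := hfx
      rw [h2] at h3
      linarith
    have hdnorm : 0 < ‖d‖ := norm_pos_iff.mpr hd0
    set e : EuclideanSpace ℝ (Fin n) := ‖d‖⁻¹ • d with he
    have heQ : e ∈ coneOf a := coneOf_smul_mem a (by positivity) hdQ
    have hen : ‖e‖ = 1 := by
      rw [he, norm_smul, norm_inv, norm_norm]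
      exact inv_mul_cancel₀ hdnorm.ne'
    have heQS : e ∈ QS := ⟨heQ, mem_sphere_zero_iff_norm.mpr hen⟩
    have hemem := ht heQS
    rw [Set.mem_iUnion₂] at hemem
    obtain ⟨q, hqt, hqball⟩ := hemem
    have hdist : ‖e - ↑q‖ < δ' q := by rwa [mem_ball_iff_norm] at hqball
    have husc' : suppR C e ≤ suppR C ↑q + ε / 3 :=
      hδ₁ q e heQ hen (lt_of_lt_of_le hdist (min_le_left _ _))
    have hyq := hyσ q
    have hcross : |⟪e - ↑q, y q⟫_ℝ| ≤ ε / 3 := by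
      have h1 := abs_real_inner_le_norm (e - ↑q) (y q)
      have h2 : ‖e - ↑q‖ ≤ ε / (3 * (‖y q‖ + 1)) :=
        le_of_lt (lt_of_lt_of_le hdist (min_le_right _ _))
      have h3 : ‖e - ↑q‖ * ‖y q‖ ≤ ε / (3 * (‖y q‖ + 1)) * ‖y q‖ :=
        mul_le_mul_of_nonneg_right h2 (norm_nonneg _)
      have h4 : ε / (3 * (‖y q‖ + 1)) * ‖y q‖ ≤ ε / 3 := by
        rw [div_mul_eq_mul_div, div_le_div_iff₀ (by positivity) (by positivity)]
        nlinarith [norm_nonneg (y q)]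
      linarith
    have hyεD : y q + ε • e ∈ D := by
      have h := hmemD (y q) ⟨hyC q, mem_closedBall_zero_iff.mpr (hry q hqt)⟩ 0 h0K (ε • e)
        (by
          rw [mem_closedBall_zero_iff, norm_smul, hen, mul_one, Real.norm_eq_abs,
            abs_of_pos hε])
      rwa [add_zero] at h
    have hsep := hfD _ hyεD
    have hde : ⟪d, e⟫_ℝ = ‖d‖ := by
      rw [he, real_inner_smul_right, real_inner_self_eq_norm_sq, sq, ← mul_assoc,
        inv_mul_cancel₀ hdnorm.ne', one_mul]
    have hkey1 : ⟪d, y q⟫_ℝ + ε * ‖d‖ < ⟪d, x⟫_ℝ := by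
      have e1 : f (y q + ε • e) = f (y q) + ε * f e := by
        rw [map_add, map_smul, smul_eq_mul]
      have e2 : f e = ⟪d, e⟫_ℝ := (hdf e).symm
      have e3 : f (y q) = ⟪d, y q⟫_ℝ := (hdf (y q)).symm
      have e4 : f x = ⟪d, x⟫_ℝ := (hdf x).symm
      rw [e1, e2, e3, hde] at hsep
      have h5 := hfx
      rw [e4] at h5
      linarith
    have hdze : ∀ z, ⟪d, z⟫_ℝ = ‖d‖ * ⟪e, z⟫_ℝ := by
      intro z
      rw [he, real_inner_smul_left, ← mul_assoc, mul_inv_cancel₀ hdnorm.ne', one_mul]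
    have hkey2 : ⟪e, y q⟫_ℝ + ε < ⟪e, x⟫_ℝ := by
      have h := hkey1
      rw [hdze (y q), hdze x] at h
      nlinarith
    have hfinal1 : ⟪e, x⟫_ℝ ≤ suppR C e := hσle e heQ x hxC
    have hsplit2 : ⟪(q : EuclideanSpace ℝ (Fin n)), y q⟫_ℝ
        = ⟪e, y q⟫_ℝ + ⟪(q : EuclideanSpace ℝ (Fin n)) - e, y q⟫_ℝ := by
      rw [inner_sub_left]
      ring
    have habs : ⟪(q : EuclideanSpace ℝ (Fin n)) - e, y q⟫_ℝ ≤ ε / 3 := by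
      have h1 : |⟪(q : EuclideanSpace ℝ (Fin n)) - e, y q⟫_ℝ| = |⟪e - ↑q, y q⟫_ℝ| := by
        rw [← abs_neg, ← inner_neg_left, neg_sub]
      have h2 := le_abs_self ⟪(q : EuclideanSpace ℝ (Fin n)) - e, y q⟫_ℝ
      linarith
    linarith
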